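/- Let f be holomorphic on the closed right half-plane Re(z) ≥ 0, satisfying |f(z)| ≤ A · exp(τ|z|) there for some constants A > 0 and 0 ≤ τ < π. If f(n) = 0 for every nonnegative integer n, then f is identically zero on the right half-plane. -/

import Mathlib

open Complex Real Set Filter Asymptotics Metric Topology

set_option maxHeartbeats 1000000

lemma carlson_abs_sin_sq (z : ℂ) :
    ‖Complex.sin z‖ ^ 2 = Real.sin z.re ^ 2 + Real.sinh z.im ^ 2 := by
  rw [Complex.sq_norm]
  conv_lhs => rw [← Complex.re_add_im z, Complex.sin_add_mul_I]
  rw [← Complex.ofReal_sin, ← Complex.ofReal_cos, ← Complex.ofReal_cosh, ← Complex.ofReal_sinh,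
    ← Complex.ofReal_mul, ← Complex.ofReal_mul, Complex.normSq_add_mul_I]
  have h1 := Real.cosh_sq z.im
  have h2 := Real.sin_sq_add_cos_sq z.re
  nlinarith

lemma carlson_sin_lower (z : ℂ) (h : ∀ n : ℤ, 1/4 ≤ ‖z - n‖) :
    1/2 ≤ ‖Complex.sin ((Real.pi : ℂ) * z)‖ := by
  set x := z.re; set y := z.im
  have hre : ((Real.pi : ℂ) * z).re = Real.pi * x := Complex.re_ofReal_mul Real.pi z
  have him : ((Real.pi : ℂ) * z).im = Real.pi * y := Complex.im_ofReal_mul Real.pi z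
  have hsq := carlson_abs_sin_sq ((Real.pi : ℂ) * z)
  rw [hre, him] at hsq
  set n : ℤ := round x with hn
  set d : ℝ := x - n with hd
  have hdle : |d| ≤ 1/2 := by simpa [hd] using (abs_sub_round x)
  have hsin_eq : Real.sin (Real.pi * x) ^ 2 = Real.sin (Real.pi * d) ^ 2 := by
    have hxd : Real.pi * x = Real.pi * d + n * Real.pi := by rw [hd]; ring
    rw [hxd, Real.sin_add_int_mul_pi, mul_pow]
    rcases Int.even_or_odd n with he | he
    · rw [he.neg_one_zpow]; ring
    · rw [Odd.neg_one_zpow he]; ring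
  have habs : |Real.sin (Real.pi * d)| = Real.sin (Real.pi * |d|) := by
    rcases le_or_gt 0 d with hd0 | hd0
    · rw [_root_.abs_of_nonneg hd0, _root_.abs_of_nonneg]
      exact Real.sin_nonneg_of_nonneg_of_le_pi (by positivity) (by nlinarith [Real.pi_pos, (abs_le.1 hdle).1, (abs_le.1 hdle).2])
    · rw [_root_.abs_of_neg hd0, _root_.abs_of_nonpos, show Real.pi * -d = -(Real.pi * d) by ring,
        Real.sin_neg]
      exact Real.sin_nonpos_of_nonpos_of_neg_pi_le (by nlinarith [Real.pi_pos])
        (by nlinarith [Real.pi_pos, (abs_le.1 hdle).1, (abs_le.1 hdle).2])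
  have hsin_ge : 2 * |d| ≤ |Real.sin (Real.pi * d)| := by
    rw [habs]
    have h1 : 0 ≤ Real.pi * |d| := by positivity
    have h2 : Real.pi * |d| ≤ Real.pi / 2 := by nlinarith [Real.pi_pos]
    have h3 := Real.mul_le_sin h1 h2
    calc 2 * |d| = 2 / Real.pi * (Real.pi * |d|) := by field_simp
    _ ≤ Real.sin (Real.pi * |d|) := h3
  have habs3 : |Real.sinh (Real.pi * y)| = Real.sinh (Real.pi * |y|) := by
    rcases le_or_gt 0 y with hy0 | hy0
    · rw [_root_.abs_of_nonneg hy0, _root_.abs_of_nonneg]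
      exact Real.sinh_nonneg_iff.2 (by positivity)
    · rw [_root_.abs_of_neg hy0, _root_.abs_of_nonpos, show Real.pi * -y = -(Real.pi * y) by ring,
        Real.sinh_neg]
      have : Real.pi * y < 0 := by nlinarith [Real.pi_pos]
      exact le_of_lt (Real.sinh_neg_iff.2 this)
  have hsinh_ge : 2 * |y| ≤ |Real.sinh (Real.pi * y)| := by
    rw [habs3]
    have h1 : Real.pi * |y| ≤ Real.sinh (Real.pi * |y|) := Real.self_le_sinh_iff.2 (by positivity)
    nlinarith [abs_nonneg y, Real.pi_gt_three]
  have hdist : (1/4:ℝ)^2 ≤ d^2 + y^2 := by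
    have h4 := h n
    have habs2 : ‖z - n‖^2 = d^2 + y^2 := by
      rw [Complex.sq_norm, Complex.normSq_apply]
      simp only [Complex.sub_re, Complex.intCast_re, Complex.sub_im, Complex.intCast_im, sub_zero]
      rw [hd]; ring
    have h5 := pow_le_pow_left₀ (by norm_num : (0:ℝ) ≤ 1/4) h4 2
    rw [habs2] at h5; exact h5
  have e1 : 4 * d^2 ≤ Real.sin (Real.pi * d) ^ 2 := by
    nlinarith [hsin_ge, abs_nonneg d, _root_.sq_abs (Real.sin (Real.pi * d)), _root_.sq_abs d]
  have e2 : 4 * y^2 ≤ Real.sinh (Real.pi * y) ^ 2 := by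
    nlinarith [hsinh_ge, abs_nonneg y, _root_.sq_abs (Real.sinh (Real.pi * y)), _root_.sq_abs y]
  clear_value x y n d
  have hfin : (1/2:ℝ)^2 ≤ ‖Complex.sin ((Real.pi : ℂ) * z)‖ ^ 2 := by
    rw [hsq, hsin_eq]
    nlinarith [e1, e2, hdist]
  nlinarith [norm_nonneg (Complex.sin ((Real.pi : ℂ) * z))]


lemma carlson_sin_zeros {z : ℂ} : Complex.sin ((Real.pi:ℂ) * z) = 0 ↔ ∃ k : ℤ, z = (k:ℂ) := by
  rw [Complex.sin_eq_zero_iff]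
  constructor
  · rintro ⟨k, hk⟩
    refine ⟨k, ?_⟩
    have hπ : (Real.pi:ℂ) ≠ 0 := Complex.ofReal_ne_zero.2 Real.pi_ne_zero
    apply mul_left_cancel₀ hπ
    rw [hk]; ring
  · rintro ⟨k, rfl⟩
    exact ⟨k, by ring⟩

lemma carlson_int_cast_toNat {k : ℤ} (hk0 : 0 ≤ k) : ((k.toNat : ℕ) : ℂ) = (k : ℂ) := by
  exact_mod_cast Int.toNat_of_nonneg hk0

lemma carlson_G_exists (g : ℂ → ℂ)
    (hg : DifferentiableOn ℂ g {z : ℂ | (-1:ℝ) < z.re})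
    (hgz : ∀ n : ℕ, g (n : ℂ) = 0) :
    ∃ G : ℂ → ℂ, DifferentiableOn ℂ G {z : ℂ | (-1/2:ℝ) < z.re} ∧
      (∀ z : ℂ, (-1/2:ℝ) < z.re → g z = G z * Complex.sin ((Real.pi:ℂ) * z)) ∧
      (∀ z : ℂ, Complex.sin ((Real.pi:ℂ) * z) ≠ 0 →
        G z = g z / Complex.sin ((Real.pi:ℂ) * z)) := by
  have hOpen : IsOpen {z : ℂ | (-1:ℝ) < z.re} := isOpen_lt continuous_const Complex.continuous_re
  set s : ℂ → ℂ := fun w => Complex.sin ((Real.pi:ℂ) * w) with hs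
  have hsdiff : Differentiable ℂ s :=
    Complex.differentiable_sin.comp ((differentiable_id.const_mul _))
  set Q : ℂ → ℂ := fun w => g w / s w with hQdef
  set G : ℂ → ℂ := fun z => if s z = 0 then limUnder (𝓝[≠] z) Q else Q z with hG
  have hGne : ∀ z : ℂ, s z ≠ 0 → G z = g z / s z := fun z hz => by
    simp only [hG, if_neg hz]; rfl
  refine ⟨G, ?_, ?_, hGne⟩
  · intro z hz
    simp only [Set.mem_setOf_eq] at hz
    apply DifferentiableAt.differentiableWithinAt
    rcases eq_or_ne (s z) 0 with hsz | hsz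
    · -- removable singularity at an integer point
      obtain ⟨k, rfl⟩ := carlson_sin_zeros.1 hsz
      have hk0 : 0 ≤ k := by
        by_contra hk
        push_neg at hk
        have : (k:ℝ) ≤ -1 := by exact_mod_cast Int.le_sub_one_of_lt hk
        simp only [Complex.intCast_re] at hz
        linarith
      have hgzk : g (k:ℂ) = 0 := by
        rw [← carlson_int_cast_toNat hk0]; exact hgz k.toNat
      have hπ : (Real.pi:ℂ) ≠ 0 := Complex.ofReal_ne_zero.2 Real.pi_ne_zero
      have hball : ball ((k:ℂ)) (1/2) ∈ 𝓝 ((k:ℂ)) := ball_mem_nhds _ (by norm_num)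
      have hnz : ∀ w ∈ ball ((k:ℂ)) (1/2) \ {(k:ℂ)}, s w ≠ 0 := by
        rintro w ⟨hw1, hw2⟩ hsw
        obtain ⟨m, rfl⟩ := carlson_sin_zeros.1 hsw
        have hmk : m ≠ k := by
          rintro rfl; exact hw2 rfl
        have h1 : (1:ℝ) ≤ ‖(m:ℂ) - (k:ℂ)‖ := by
          have he : ((m:ℂ) - (k:ℂ)) = ((m - k : ℤ) : ℂ) := by push_cast; ring
          rw [he, show ‖((m - k : ℤ) : ℂ)‖ = |((m - k : ℤ) : ℝ)| by
            rw [← Complex.ofReal_intCast, Complex.norm_real, Real.norm_eq_abs], ← Int.cast_abs]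
          exact_mod_cast Int.one_le_abs (sub_ne_zero.2 hmk)
        rw [mem_ball, Complex.dist_eq] at hw1
        linarith
      have hball_sub : ball ((k:ℂ)) (1/2) ⊆ {z : ℂ | (-1:ℝ) < z.re} := by
        intro w hw
        rw [mem_ball, Complex.dist_eq] at hw
        have h1 : |(w - (k:ℂ)).re| ≤ ‖w - (k:ℂ)‖ := Complex.abs_re_le_norm _
        have h2 : (w - (k:ℂ)).re = w.re - (k:ℝ) := by simp
        have h3 : (0:ℝ) ≤ (k:ℝ) := by exact_mod_cast hk0
        simp only [Set.mem_setOf_eq]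
        rw [h2] at h1
        cases' abs_le.1 h1 with h4 _
        linarith
      have hQd : DifferentiableOn ℂ Q (ball ((k:ℂ)) (1/2) \ {(k:ℂ)}) := by
        intro w hw
        exact (((hg.differentiableAt (hOpen.mem_nhds (hball_sub hw.1))).div (hsdiff w)
          (hnz w hw))).differentiableWithinAt
      have hQz : Q (k:ℂ) = 0 := by simp [hQdef, hsz, hgzk]
      have hglip : (fun w => g w) =O[𝓝 ((k:ℂ))] fun w => w - (k:ℂ) := by
        have := (hg.differentiableAt (hOpen.mem_nhds
          (hball_sub (mem_ball_self (by norm_num))))).isBigO_sub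
        simpa [hgzk] using this
      have hsder : HasDerivAt s ((Real.pi:ℂ) * Complex.cos ((Real.pi:ℂ) * (k:ℂ))) (k:ℂ) := by
        exact (((Complex.hasDerivAt_sin ((Real.pi:ℂ) * (k:ℂ))).comp (k:ℂ)
            ((hasDerivAt_id ((k:ℂ))).const_mul ((Real.pi:ℂ)))).congr_deriv (by ring))
      have hcosne : Complex.cos ((Real.pi:ℂ) * (k:ℂ)) ≠ 0 := by
        rw [Ne, Complex.cos_eq_zero_iff]
        rintro ⟨m, hm⟩
        have h2 : (2:ℂ) * (k:ℂ) = 2*(m:ℂ)+1 := by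
          apply mul_left_cancel₀ hπ
          linear_combination 2*hm
        have h3 : (2*k : ℤ) = 2*m+1 := by exact_mod_cast h2
        omega
      have hsrev : (fun w => w - (k:ℂ)) =O[𝓝 ((k:ℂ))] s := by
        have h := (hsder.hasDerivAtFilter le_rfl).isBigO_sub_rev
          (mul_ne_zero hπ hcosne)
        simpa [hsz, Function.comp_def] using h
      have hQbigO : Q =O[𝓝[≠] ((k:ℂ))] (fun _ => (1:ℂ)) := by
        have h1 : (fun w => g w) =O[𝓝[≠] ((k:ℂ))] fun w => w - (k:ℂ) :=
          hglip.mono nhdsWithin_le_nhds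
        have h2 : (fun w => (s w)⁻¹) =O[𝓝[≠] ((k:ℂ))] fun w => (w - (k:ℂ))⁻¹ := by
          refine IsBigO.inv_rev (hsrev.mono nhdsWithin_le_nhds) ?_
          filter_upwards [self_mem_nhdsWithin] with w hw
          intro hcontra
          exact absurd hcontra (sub_ne_zero.2 hw)
        have h3 := h1.mul h2
        have h4 : Q = fun w => g w * (s w)⁻¹ := by
          funext w; rw [hQdef]; simp [div_eq_mul_inv]
        rw [h4]
        refine h3.trans (IsBigO.of_bound 1 ?_)
        filter_upwards [self_mem_nhdsWithin] with w hw
        rw [mul_inv_cancel₀ (sub_ne_zero.2 hw)]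
        simp
      have hinv_top : Tendsto (fun w => ‖(w - (k:ℂ))⁻¹‖) (𝓝[≠] ((k:ℂ))) atTop := by
        have h1 : Tendsto (fun w : ℂ => w - (k:ℂ)) (𝓝[≠] ((k:ℂ))) (𝓝[≠] 0) := by
          apply tendsto_nhdsWithin_of_tendsto_nhds_of_eventually_within
          · exact ((continuous_sub_right ((k:ℂ))).tendsto' ((k:ℂ)) 0 (sub_self _)).mono_left
              nhdsWithin_le_nhds
          · exact eventually_mem_nhdsWithin.mono fun w hw => sub_ne_zero.2 hw
        have h2 : Tendsto (fun w : ℂ => ‖w - (k:ℂ)‖) (𝓝[≠] ((k:ℂ))) (𝓝[>] 0) :=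
          tendsto_norm_nhdsNE_zero.comp h1
        have h3 := h2.inv_tendsto_nhdsGT_zero
        refine h3.congr fun w => ?_
        simp [norm_inv]
      have ho : (fun w => Q w - Q ((k:ℂ))) =o[𝓝[≠] ((k:ℂ))] fun w => (w - (k:ℂ))⁻¹ := by
        rw [hQz]
        simp only [sub_zero]
        exact hQbigO.trans_isLittleO ((isLittleO_const_left).2 (Or.inr hinv_top))
      have hupd := Complex.differentiableOn_update_limUnder_of_isLittleO hball hQd ho
      have hGeq : G =ᶠ[𝓝 ((k:ℂ))] Function.update Q ((k:ℂ)) (limUnder (𝓝[≠] ((k:ℂ))) Q) := by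
        filter_upwards [hball] with w hw
        rcases eq_or_ne w ((k:ℂ)) with rfl | hwc
        · simp [hG, hsz, Function.update_self]
        · rw [Function.update_of_ne hwc]
          exact hGne w (hnz w ⟨hw, hwc⟩)
      have hupd_at : DifferentiableAt ℂ
          (Function.update Q ((k:ℂ)) (limUnder (𝓝[≠] ((k:ℂ))) Q)) ((k:ℂ)) :=
        (hupd _ (mem_ball_self (by norm_num))).differentiableAt
          (isOpen_ball.mem_nhds (mem_ball_self (by norm_num)))
      exact hupd_at.congr_of_eventuallyEq hGeq
    · have hopen : IsOpen {w : ℂ | s w ≠ 0} := isOpen_ne_fun (hsdiff.continuous) continuous_const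
      have hQdiff : DifferentiableAt ℂ Q z :=
        (hg.differentiableAt (hOpen.mem_nhds
          (by simp only [Set.mem_setOf_eq]; linarith))).div (hsdiff z) hsz
      refine hQdiff.congr_of_eventuallyEq ?_
      filter_upwards [hopen.mem_nhds hsz] with w hw
      exact hGne w hw
  · intro z hz
    rcases eq_or_ne (s z) 0 with hsz | hsz
    · obtain ⟨k, rfl⟩ := carlson_sin_zeros.1 hsz
      have hk0 : 0 ≤ k := by
        by_contra hk
        push_neg at hk
        have : (k:ℝ) ≤ -1 := by exact_mod_cast Int.le_sub_one_of_lt hk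
        simp only [Complex.intCast_re] at hz
        linarith
      have hsz' : Complex.sin ((Real.pi:ℂ) * (k:ℂ)) = 0 := hsz
      rw [hsz', mul_zero, ← carlson_int_cast_toNat hk0]
      exact hgz k.toNat
    · rw [hGne z hsz, div_mul_cancel₀ _ hsz]


lemma carlson_G_bound (g G : ℂ → ℂ) (A τ : ℝ) (hA : 0 < A) (hτ0 : 0 ≤ τ)
    (hGdiff : DifferentiableOn ℂ G {z : ℂ | (-1/2:ℝ) < z.re})
    (hGq : ∀ z : ℂ, Complex.sin ((Real.pi:ℂ) * z) ≠ 0 →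
        G z = g z / Complex.sin ((Real.pi:ℂ) * z))
    (hgb : ∀ z : ℂ, (-1/2:ℝ) < z.re → ‖g z‖ ≤ A * Real.exp (τ * (‖z‖ + 1))) :
    ∀ z : ℂ, 0 ≤ z.re → ‖G z‖ ≤ 2 * A * Real.exp (τ * (‖z‖ + 2)) := by
  intro z hz
  -- the bound for points far from the integers
  have key : ∀ w : ℂ, (-1/2:ℝ) < w.re → (∀ n : ℤ, 1/4 ≤ ‖w - n‖) →
      ‖G w‖ ≤ 2 * A * Real.exp (τ * (‖w‖ + 1)) := by
    intro w hw hdist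
    have hsne : Complex.sin ((Real.pi:ℂ) * w) ≠ 0 := by
      intro hcon
      obtain ⟨m, rfl⟩ := carlson_sin_zeros.1 hcon
      have := hdist m
      simp at this
      linarith
    have hlow := carlson_sin_lower w hdist
    rw [hGq w hsne, norm_div]
    rw [div_le_iff₀ (by linarith)]
    calc ‖g w‖ ≤ A * Real.exp (τ * (‖w‖ + 1)) := hgb w hw
    _ ≤ (2 * A * Real.exp (τ * (‖w‖ + 1))) * (1/2) := by ring_nf; linarith [Real.exp_pos (τ * (‖w‖ + 1))]
    _ ≤ (2 * A * Real.exp (τ * (‖w‖ + 1))) * ‖Complex.sin ((Real.pi:ℂ) * w)‖ := by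
        apply mul_le_mul_of_nonneg_left hlow
        positivity
  by_cases hfar : ∀ n : ℤ, 1/4 ≤ ‖z - n‖
  · refine (key z (by linarith) hfar).trans ?_
    have : ‖z‖ + 1 ≤ ‖z‖ + 2 := by linarith
    have := Real.exp_le_exp.2 (mul_le_mul_of_nonneg_left this hτ0)
    nlinarith [Real.exp_pos (τ * (‖z‖ + 1))]
  · push_neg at hfar
    obtain ⟨n, hn⟩ := hfar
    have hn0 : 0 ≤ n := by
      by_contra hcon
      push_neg at hcon
      have h1 : ‖z - n‖ ≥ |(z - n).re| := Complex.abs_re_le_norm _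
      have h2 : (z - n).re = z.re - (n:ℝ) := by simp
      have h3 : (n:ℝ) ≤ -1 := by exact_mod_cast Int.le_sub_one_of_lt hcon
      rw [h2] at h1
      have : (1:ℝ) ≤ |z.re - n| := by
        rw [_root_.abs_of_nonneg (by linarith)]; linarith
      linarith
    -- maximum modulus on ball (n, 1/4)
    have hzball : z ∈ closure (ball ((n:ℂ)) (1/4)) := subset_closure (by
      rw [mem_ball, Complex.dist_eq]; exact hn)
    have hball_sub : closedBall ((n:ℂ)) (1/4) ⊆ {w : ℂ | (-1/2:ℝ) < w.re} := by
      intro w hw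
      rw [mem_closedBall, Complex.dist_eq] at hw
      have h1 : |(w - (n:ℂ)).re| ≤ ‖w - (n:ℂ)‖ := Complex.abs_re_le_norm _
      have h2 : (w - (n:ℂ)).re = w.re - (n:ℝ) := by simp
      have h3 : (0:ℝ) ≤ (n:ℝ) := by exact_mod_cast hn0
      rw [h2] at h1
      simp only [Set.mem_setOf_eq]
      cases' abs_le.1 h1 with h4 _
      linarith
    have hdcl : DiffContOnCl ℂ G (ball ((n:ℂ)) (1/4)) := by
      apply DifferentiableOn.diffContOnCl
      rw [closure_ball ((n:ℂ)) (by norm_num : (1/4:ℝ) ≠ 0)]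
      exact hGdiff.mono hball_sub
    have hbd : Bornology.IsBounded (ball ((n:ℂ)) (1/4)) := Metric.isBounded_ball
    have hfr : ∀ w ∈ frontier (ball ((n:ℂ)) (1/4)),
        ‖G w‖ ≤ 2 * A * Real.exp (τ * (‖z‖ + 2)) := by
      intro w hw
      rw [frontier_ball ((n:ℂ)) (by norm_num : (1/4:ℝ) ≠ 0), mem_sphere, Complex.dist_eq] at hw
      have hwre : (-1/2:ℝ) < w.re := hball_sub (by
        rw [mem_closedBall, Complex.dist_eq, hw])
      have hwdist : ∀ m : ℤ, 1/4 ≤ ‖w - m‖ := by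
        intro m
        rcases eq_or_ne m n with rfl | hmn
        · rw [hw]
        · have h1 : (1:ℝ) ≤ ‖(n:ℂ) - (m:ℂ)‖ := by
            have he : ((n:ℂ) - (m:ℂ)) = ((n - m : ℤ) : ℂ) := by push_cast; ring
            rw [he, show ‖((n - m : ℤ) : ℂ)‖ = |((n - m : ℤ) : ℝ)| by
              rw [← Complex.ofReal_intCast, Complex.norm_real, Real.norm_eq_abs], ← Int.cast_abs]
            exact_mod_cast Int.one_le_abs (sub_ne_zero.2 (fun h => hmn h.symm))
          have h2 : ‖(n:ℂ) - (m:ℂ)‖ ≤ ‖(n:ℂ) - w‖ + ‖w - (m:ℂ)‖ := by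
            simpa using norm_add_le ((n:ℂ) - w) (w - (m:ℂ))
          have h3 : ‖(n:ℂ) - w‖ = 1/4 := by rwa [norm_sub_rev]
          linarith
      have hb := key w hwre hwdist
      have hwz : ‖w‖ ≤ ‖z‖ + 1 := by
        have h1 : ‖w - z‖ ≤ ‖w - (n:ℂ)‖ + ‖(n:ℂ) - z‖ := by
          simpa using norm_add_le (w - (n:ℂ)) ((n:ℂ) - z)
        have h2 : ‖w‖ ≤ ‖w - z‖ + ‖z‖ := by
          simpa using norm_add_le (w - z) z
        have h4 : ‖(n:ℂ) - z‖ ≤ 1/4 := by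
          rw [norm_sub_rev]; exact hn.le
        rw [hw] at h1
        linarith
      refine hb.trans ?_
      have : τ * (‖w‖ + 1) ≤ τ * (‖z‖ + 2) :=
        mul_le_mul_of_nonneg_left (by linarith) hτ0
      have := Real.exp_le_exp.2 this
      nlinarith
    exact Complex.norm_le_of_forall_mem_frontier_norm_le hbd hdcl hfr hzball


lemma carlson_sinh_abs (t : ℝ) : |Real.sinh t| = Real.sinh |t| := by
  rcases le_or_gt 0 t with h | h
  · rw [_root_.abs_of_nonneg h, _root_.abs_of_nonneg (Real.sinh_nonneg_iff.2 h)]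
  · rw [_root_.abs_of_neg h, _root_.abs_of_neg (Real.sinh_neg_iff.2 h), Real.sinh_neg]

lemma carlson_D_lower (z : ℂ) (hz : 0 ≤ z.re) :
    Real.exp (-(Real.pi/2) * ‖z‖) ≤
      ‖Complex.exp (z * Complex.log (1+z))‖ := by
  rw [Complex.norm_exp, Real.exp_le_exp]
  rw [Complex.mul_re, Complex.log_re, Complex.log_im]
  have hre1 : (1:ℝ) ≤ (1+z).re := by simp [Complex.add_re]; linarith
  have habs1 : (1:ℝ) ≤ ‖1+z‖ := le_trans hre1 (Complex.re_le_norm _)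
  have h1 : 0 ≤ z.re * Real.log (‖1+z‖) :=
    mul_nonneg hz (Real.log_nonneg habs1)
  have harg : |Complex.arg (1+z)| ≤ Real.pi/2 :=
    Complex.abs_arg_le_pi_div_two_iff.2 (by linarith)
  have h2 : |z.im * Complex.arg (1+z)| ≤ ‖z‖ * (Real.pi/2) := by
    rw [abs_mul]
    exact mul_le_mul (Complex.abs_im_le_norm z) harg (abs_nonneg _) (norm_nonneg z)
  have h3 := abs_le.1 h2
  nlinarith [h3.1, h3.2]

lemma carlson_D_real (x : ℝ) (hx : 0 ≤ x) :
    ‖Complex.exp ((x:ℂ) * Complex.log (1+(x:ℂ)))‖ =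
      Real.exp (x * Real.log (1+x)) := by
  rw [show (1:ℂ) + (x:ℂ) = ((1+x : ℝ):ℂ) by push_cast; ring,
    ← Complex.ofReal_log (by linarith), ← Complex.ofReal_mul, Complex.norm_exp, Complex.ofReal_re]

lemma carlson_D_diff :
    DifferentiableOn ℂ (fun z => Complex.exp (z * Complex.log (1+z)))
      {z : ℂ | (-1/2:ℝ) < z.re} := by
  intro z hz
  simp only [Set.mem_setOf_eq] at hz
  apply DifferentiableAt.differentiableWithinAt
  apply DifferentiableAt.cexp
  apply DifferentiableAt.mul differentiableAt_id
  have h1 : (1+z) ∈ Complex.slitPlane := Complex.mem_slitPlane_iff.2 (Or.inl (by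
    simp [Complex.add_re]; linarith))
  exact (Complex.differentiableAt_log h1).comp z ((differentiableAt_const 1).add differentiableAt_id)


lemma carlson_exp_pow_div (a b c : ℝ) (k : ℕ) :
    (a * Real.exp b)^k / Real.exp c = a^k * Real.exp ((k:ℝ)*b - c) := by
  rw [mul_pow, ← Real.exp_nat_mul, mul_div_assoc, ← Real.exp_sub]

lemma carlson_exp_pow_mul (a b c : ℝ) (k : ℕ) :
    (a * Real.exp b)^k * Real.exp c = a^k * Real.exp ((k:ℝ)*b + c) := by
  rw [mul_pow, ← Real.exp_nat_mul, mul_assoc, ← Real.exp_add]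

theorem carlson_theorem (f : ℂ → ℂ)
    (hcont : ContinuousOn f {z : ℂ | 0 ≤ z.re})
    (hdiff : DifferentiableOn ℂ f {z : ℂ | 0 < z.re})
    (A τ : ℝ) (hA : 0 < A) (hτ0 : 0 ≤ τ) (hτ : τ < Real.pi)
    (hbound : ∀ z : ℂ, 0 ≤ z.re → ‖f z‖ ≤ A * Real.exp (τ * ‖z‖))
    (hzero : ∀ n : ℕ, f (n : ℂ) = 0) :
    ∀ z : ℂ, 0 ≤ z.re → f z = 0 := by
  have hopen0 : IsOpen {z : ℂ | (0:ℝ) < z.re} := isOpen_lt continuous_const Complex.continuous_re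
  set g : ℂ → ℂ := fun z => f (z + 1) with hgdef
  have hgdiff : DifferentiableOn ℂ g {z : ℂ | (-1:ℝ) < z.re} := by
    intro z hz
    simp only [Set.mem_setOf_eq] at hz
    have h1 : DifferentiableAt ℂ f (z+1) := hdiff.differentiableAt (hopen0.mem_nhds (by
      simp only [Set.mem_setOf_eq, Complex.add_re, Complex.one_re]; linarith))
    exact (h1.comp z ((differentiableAt_id).add_const 1)).differentiableWithinAt
  have hgz : ∀ n : ℕ, g (n:ℂ) = 0 := by
    intro n
    have h1 : ((n:ℂ) + 1) = ((n+1 : ℕ) : ℂ) := by push_cast; ring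
    show f ((n:ℂ) + 1) = 0
    rw [h1]; exact hzero (n+1)
  have hgb : ∀ z : ℂ, (-1/2:ℝ) < z.re →
      ‖g z‖ ≤ A * Real.exp (τ * (‖z‖ + 1)) := by
    intro z hz
    have h1 : 0 ≤ (z+1).re := by simp only [Complex.add_re, Complex.one_re]; linarith
    refine (hbound (z+1) h1).trans ?_
    have h2 : ‖z+1‖ ≤ ‖z‖ + 1 := by simpa using norm_add_le z 1
    have h3 := Real.exp_le_exp.2 (mul_le_mul_of_nonneg_left h2 hτ0)
    exact mul_le_mul_of_nonneg_left h3 hA.le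
  obtain ⟨G, hGdiff, hGfac, hGq⟩ := carlson_G_exists g hgdiff hgz
  have hGbound := carlson_G_bound g G A τ hA hτ0 hGdiff hGq hgb
  -- choose the power k
  have hπτ : 0 < Real.pi - τ := by linarith
  obtain ⟨k₀, hk₀⟩ := exists_nat_ge ((Real.pi/2) / (Real.pi - τ))
  have hkineq : Real.pi/2 ≤ ((k₀+1:ℕ):ℝ) * (Real.pi - τ) := by
    have h1 := mul_le_mul_of_nonneg_right hk₀ hπτ.le
    rw [div_mul_cancel₀ _ (ne_of_gt hπτ)] at h1
    have h2 : ((k₀:ℝ)) * (Real.pi - τ) ≤ ((k₀+1:ℕ):ℝ) * (Real.pi - τ) := by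
      apply mul_le_mul_of_nonneg_right _ hπτ.le
      push_cast; linarith
    linarith
  set k : ℕ := k₀ + 1 with hkdef
  set D : ℂ → ℂ := fun z => Complex.exp (z * Complex.log (1+z)) with hD
  set H : ℂ → ℂ := fun z => (G z)^k / D z with hH
  have hΩsub : {z : ℂ | (0:ℝ) ≤ z.re} ⊆ {z : ℂ | (-1/2:ℝ) < z.re} := by
    intro z hz; simp only [Set.mem_setOf_eq] at *; linarith
  have hDne : ∀ z : ℂ, D z ≠ 0 := fun z => Complex.exp_ne_zero _
  have hHdiffΩ : DifferentiableOn ℂ H {z : ℂ | (-1/2:ℝ) < z.re} :=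
    (hGdiff.pow k).div carlson_D_diff (fun z _ => hDne z)
  have hd : DiffContOnCl ℂ H {z : ℂ | 0 < z.re} := by
    apply DifferentiableOn.diffContOnCl
    rw [closure_setOf_lt_re]
    exact hHdiffΩ.mono hΩsub
  have hHnorm : ∀ z : ℂ, ‖H z‖ = ‖G z‖^k / ‖D z‖ := by
    intro z; rw [hH]; simp only [norm_div, norm_pow]
  -- him : boundedness on the imaginary axis
  have habsyI : ∀ y : ℝ, ‖(y:ℂ) * Complex.I‖ = |y| := by
    intro y; rw [norm_mul, Complex.norm_I, Complex.norm_real, Real.norm_eq_abs, mul_one]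
  have hreyI : ∀ y : ℝ, ((y:ℂ) * Complex.I).re = 0 := by
    intro y; simp [Complex.mul_re]
  have hHy : ∀ y : ℝ, ‖H ((y:ℂ)*Complex.I)‖ ≤
      ‖G ((y:ℂ)*Complex.I)‖^k * Real.exp ((Real.pi/2)*|y|) := by
    intro y
    rw [hHnorm]
    have hDy := carlson_D_lower ((y:ℂ)*Complex.I) (le_of_eq (hreyI y).symm)
    rw [habsyI] at hDy
    have hinv : (‖D ((y:ℂ)*Complex.I)‖)⁻¹ ≤ Real.exp ((Real.pi/2)*|y|) := by
      have h1 : (‖D ((y:ℂ)*Complex.I)‖)⁻¹ ≤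
          (Real.exp (-(Real.pi/2)*|y|))⁻¹ := by
        apply inv_anti₀ (Real.exp_pos _) hDy
      refine h1.trans (le_of_eq ?_)
      rw [show (-(Real.pi/2)*|y|) = -((Real.pi/2)*|y|) by ring, Real.exp_neg, inv_inv]
    rw [div_eq_mul_inv]
    exact mul_le_mul_of_nonneg_left hinv (pow_nonneg (norm_nonneg _) k)
  have hcompact : IsCompact ((fun y : ℝ => (y:ℂ) * Complex.I) '' Icc (-1:ℝ) 1) :=
    isCompact_Icc.image (by continuity)
  have hsub2 : ((fun y : ℝ => (y:ℂ) * Complex.I) '' Icc (-1:ℝ) 1) ⊆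
      {z : ℂ | (-1/2:ℝ) < z.re} := by
    rintro w ⟨y, hy, rfl⟩
    simp only [Set.mem_setOf_eq]
    rw [hreyI]; norm_num
  obtain ⟨M, hM⟩ := hcompact.exists_bound_of_continuousOn (hGdiff.continuousOn.mono hsub2)
  set M' := max M 0 with hM'
  have him : ∃ C, ∀ y : ℝ, ‖H ((y:ℂ) * Complex.I)‖ ≤ C := by
    refine ⟨max (M'^k * Real.exp (Real.pi/2)) ((4*A*Real.exp τ)^k), fun y => ?_⟩
    rcases le_or_gt |y| 1 with hy | hy
    · refine (hHy y).trans (le_trans ?_ (le_max_left _ _))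
      have hGy : ‖G ((y:ℂ)*Complex.I)‖ ≤ M' := by
        have hmem : ((y:ℂ)*Complex.I) ∈ ((fun y : ℝ => (y:ℂ) * Complex.I) '' Icc (-1:ℝ) 1) :=
          ⟨y, abs_le.1 hy, rfl⟩
        refine le_trans ?_ (le_max_left M 0)
        simpa using hM _ hmem
      have hex : Real.exp ((Real.pi/2)*|y|) ≤ Real.exp (Real.pi/2) := by
        rw [Real.exp_le_exp]
        nlinarith [Real.pi_pos, abs_nonneg y]
      have hM'0 : 0 ≤ M' := le_max_right M 0
      exact mul_le_mul (pow_le_pow_left₀ (norm_nonneg _) hGy k) hex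
        (Real.exp_pos _).le (by positivity)
    · refine (hHy y).trans (le_trans ?_ (le_max_right _ _))
      have hsin : ‖Complex.sin ((Real.pi:ℂ) * ((y:ℂ)*Complex.I))‖ =
          Real.sinh (Real.pi*|y|) := by
        rw [show (Real.pi:ℂ) * ((y:ℂ)*Complex.I) = ((Real.pi*y : ℝ):ℂ) * Complex.I by
          push_cast; ring, Complex.sin_mul_I, norm_mul, Complex.norm_I, mul_one,
          ← Complex.ofReal_sinh, Complex.norm_real, Real.norm_eq_abs, carlson_sinh_abs, abs_mul,
          _root_.abs_of_nonneg Real.pi_pos.le]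
      have hsinh_ge : Real.pi * |y| ≤ Real.sinh (Real.pi*|y|) :=
        Real.self_le_sinh_iff.2 (by positivity)
      have hsinh_pos : 0 < Real.sinh (Real.pi*|y|) := by nlinarith [Real.pi_pos]
      have hsne : Complex.sin ((Real.pi:ℂ)*((y:ℂ)*Complex.I)) ≠ 0 := by
        intro h0; rw [h0] at hsin; simp at hsin; linarith
      have hsinh_low : Real.exp (Real.pi*|y|) / 4 ≤ Real.sinh (Real.pi*|y|) := by
        rw [Real.sinh_eq]
        have h5 : Real.exp (-(Real.pi*|y|)) ≤ 1 := Real.exp_le_one_iff.2 (neg_nonpos.2 (by positivity))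
        have h6 : (2:ℝ) ≤ Real.exp (Real.pi*|y|) := by
          have h7 := Real.add_one_le_exp (Real.pi*|y|)
          nlinarith [Real.pi_gt_three]
        linarith
      have hGyb : ‖G ((y:ℂ)*Complex.I)‖ ≤
          4*A*Real.exp (τ*(|y|+1) - Real.pi*|y|) := by
        rw [hGq _ hsne, norm_div, hsin, div_le_iff₀ hsinh_pos]
        have hgy : ‖g ((y:ℂ)*Complex.I)‖ ≤ A * Real.exp (τ*(|y|+1)) := by
          have := hgb ((y:ℂ)*Complex.I) (by show (-1/2:ℝ) < ((y:ℂ)*Complex.I).re; rw [hreyI]; norm_num)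
          rwa [habsyI] at this
        refine hgy.trans ?_
        have heq1 : (4*A*Real.exp (τ*(|y|+1) - Real.pi*|y|)) * (Real.exp (Real.pi*|y|)/4)
            = A * Real.exp (τ*(|y|+1)) := by
          rw [show (4*A*Real.exp (τ*(|y|+1) - Real.pi*|y|)) * (Real.exp (Real.pi*|y|)/4)
            = A * (Real.exp (τ*(|y|+1) - Real.pi*|y|) * Real.exp (Real.pi*|y|)) by ring,
            ← Real.exp_add, sub_add_cancel]
        rw [← heq1]
        apply mul_le_mul_of_nonneg_left hsinh_low (by positivity)
      calc ‖G ((y:ℂ)*Complex.I)‖^k * Real.exp ((Real.pi/2)*|y|)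
          ≤ (4*A*Real.exp (τ*(|y|+1) - Real.pi*|y|))^k * Real.exp ((Real.pi/2)*|y|) :=
            mul_le_mul_of_nonneg_right (pow_le_pow_left₀ (norm_nonneg _) hGyb k)
              (Real.exp_pos _).le
      _ = (4*A)^k * Real.exp ((k:ℝ)*(τ*(|y|+1) - Real.pi*|y|) + (Real.pi/2)*|y|) := by
            rw [mul_pow, ← Real.exp_nat_mul, mul_assoc, ← Real.exp_add]
      _ ≤ (4*A)^k * Real.exp ((k:ℝ)*τ) := by
            apply mul_le_mul_of_nonneg_left _ (by positivity)
            rw [Real.exp_le_exp]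
            have h7 : ((k:ℝ)*τ - (k:ℝ)*Real.pi + Real.pi/2) * |y| ≤ 0 := by
              apply mul_nonpos_of_nonpos_of_nonneg _ (abs_nonneg y)
              have : Real.pi/2 ≤ (k:ℝ) * (Real.pi - τ) := hkineq
              nlinarith
            have h8 : (k:ℝ)*(τ*(|y|+1) - Real.pi*|y|) + (Real.pi/2)*|y|
                = (k:ℝ)*τ + ((k:ℝ)*τ - (k:ℝ)*Real.pi + Real.pi/2)*|y| := by ring
            linarith
      _ = (4*A*Real.exp τ)^k := by rw [Real.exp_nat_mul]; ring
  -- hre : superexponential decay on the reals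
  have hre : SuperpolynomialDecay atTop Real.exp (fun x : ℝ => ‖H (x:ℂ)‖) := by
    intro n
    have hb : ∀ x : ℝ, 0 ≤ x → Real.exp x ^ n * ‖H (x:ℂ)‖ ≤
        (2*A)^k * Real.exp (2*(k:ℝ)*τ) *
          Real.exp (((n:ℝ) + (k:ℝ)*τ - Real.log (1+x)) * x) := by
      intro x hx
      have habsx : ‖(x:ℂ)‖ = x := by
        rw [Complex.norm_real, Real.norm_eq_abs, _root_.abs_of_nonneg hx]
      have hG1 : ‖G (x:ℂ)‖ ≤ 2*A*Real.exp (τ*(x+2)) := by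
        have h1 := hGbound (x:ℂ) (by rw [Complex.ofReal_re]; exact hx)
        rwa [habsx] at h1
      have hD1 : ‖D (x:ℂ)‖ = Real.exp (x * Real.log (1+x)) := carlson_D_real x hx
      rw [hHnorm, hD1]
      have step1 : Real.exp x ^ n * (‖G (x:ℂ)‖^k / Real.exp (x*Real.log (1+x)))
          ≤ Real.exp x ^ n * ((2*A*Real.exp (τ*(x+2)))^k / Real.exp (x*Real.log (1+x))) := by
        gcongr
        all_goals first
          | exact norm_nonneg _
          | exact hG1
      refine step1.trans (le_of_eq ?_)
      rw [← Real.exp_nat_mul, mul_pow, ← Real.exp_nat_mul, mul_div_assoc, ← Real.exp_sub,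
        mul_left_comm, ← Real.exp_add, mul_assoc, ← Real.exp_add]
      rw [mul_left_comm]
      congr 1
      push_cast
      ring
    have hlog : Tendsto (fun x:ℝ => Real.log (1+x)) atTop atTop :=
      Real.tendsto_log_atTop.comp (tendsto_atTop_add_const_left atTop 1 tendsto_id)
    have hc : Tendsto (fun x:ℝ => (n:ℝ) + (k:ℝ)*τ - Real.log (1+x)) atTop atBot := by
      have h1 : Tendsto (fun x:ℝ => -Real.log (1+x)) atTop atBot :=
        tendsto_neg_atTop_atBot.comp hlog
      have h2 := tendsto_atBot_add_const_left atTop ((n:ℝ) + (k:ℝ)*τ) h1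
      refine h2.congr fun x => by ring
    have hprod : Tendsto (fun x:ℝ => ((n:ℝ) + (k:ℝ)*τ - Real.log (1+x)) * x) atTop atBot :=
      hc.atBot_mul_atTop₀ tendsto_id
    have hexp0 : Tendsto (fun x:ℝ =>
        Real.exp (((n:ℝ) + (k:ℝ)*τ - Real.log (1+x)) * x)) atTop (𝓝 0) :=
      Real.tendsto_exp_atBot.comp hprod
    have hg0 : Tendsto (fun x:ℝ => (2*A)^k * Real.exp (2*(k:ℝ)*τ) *
        Real.exp (((n:ℝ) + (k:ℝ)*τ - Real.log (1+x)) * x)) atTop (𝓝 0) := by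
      simpa using hexp0.const_mul ((2*A)^k * Real.exp (2*(k:ℝ)*τ))
    refine squeeze_zero' ?_ ?_ hg0
    · filter_upwards [eventually_ge_atTop (0:ℝ)] with x hx
      positivity
    · filter_upwards [eventually_ge_atTop (0:ℝ)] with x hx
      exact hb x hx
  -- hexp : growth bound in the right half-plane
  have hHzero : EqOn H 0 {z : ℂ | 0 ≤ z.re} := by
    apply PhragmenLindelof.eq_zero_on_right_half_plane_of_superexponential_decay hd ?_ hre him
    refine ⟨1, one_lt_two, (k:ℝ)*τ + Real.pi/2, ?_⟩
    refine IsBigO.of_bound ((2*A*Real.exp (2*τ))^k) ?_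
    filter_upwards [mem_inf_of_right (mem_principal_self _)] with z hz
    have hz' : 0 < z.re := hz
    have hGz := hGbound z hz'.le
    have hDz := carlson_D_lower z hz'.le
    rw [hHnorm z, Real.norm_eq_abs, Real.abs_exp, Real.rpow_one]
    have step1 : ‖G z‖^k / ‖D z‖ ≤
        (2*A*Real.exp (τ*(‖z‖+2)))^k / Real.exp (-(Real.pi/2)*‖z‖) :=
      div_le_div₀ (by positivity) (pow_le_pow_left₀ (norm_nonneg _) hGz k)
        (Real.exp_pos _) hDz
    refine step1.trans (le_of_eq ?_)
    rw [carlson_exp_pow_div, carlson_exp_pow_mul]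
    congr 1
    rw [Real.exp_eq_exp]
    push_cast
    ring
  -- conclude
  have hG0 : ∀ z : ℂ, 0 ≤ z.re → G z = 0 := by
    intro z hz
    have h1 : G z ^ k / D z = 0 := hHzero hz
    rcases div_eq_zero_iff.1 h1 with h2 | h2
    · exact pow_eq_zero_iff (by omega : k ≠ 0) |>.1 h2
    · exact absurd h2 (hDne z)
  have hf1 : ∀ w : ℂ, 1 ≤ w.re → f w = 0 := by
    intro w hw
    have h1 : (-1/2:ℝ) < (w - 1).re := by
      simp only [Complex.sub_re, Complex.one_re]; linarith
    have h3 := hGfac (w-1) h1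
    rw [hG0 (w-1) (by simp only [Complex.sub_re, Complex.one_re]; linarith), zero_mul] at h3
    have h2 : g (w-1) = f w := by rw [hgdef]; simp
    rw [← h2, h3]
  have han : AnalyticOnNhd ℂ f {z : ℂ | 0 < z.re} := hdiff.analyticOnNhd hopen0
  have hpre : IsPreconnected {z : ℂ | 0 < z.re} := (convex_halfSpace_re_gt 0).isPreconnected
  have h2mem : (2:ℂ) ∈ {z : ℂ | 0 < z.re} := by norm_num [Set.mem_setOf_eq]
  have hev : f =ᶠ[𝓝 (2:ℂ)] 0 := by
    have hopen2 : IsOpen {z : ℂ | (1:ℝ) < z.re} := isOpen_lt continuous_const Complex.continuous_re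
    filter_upwards [hopen2.mem_nhds (by norm_num [Set.mem_setOf_eq])] with w hw
    exact hf1 w (le_of_lt hw)
  have heq := han.eqOn_zero_of_preconnected_of_eventuallyEq_zero hpre h2mem hev
  have hfinal : EqOn f 0 {z : ℂ | 0 ≤ z.re} := by
    apply Set.EqOn.of_subset_closure heq hcont continuousOn_const
    · intro z hz
      simp only [Set.mem_setOf_eq] at hz ⊢
      linarith
    · rw [closure_setOf_lt_re]
  intro z hz
  exact hfinal hz
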